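/- (Irreducibility of the bosonic Fock space over the Weyl algebra.) Let σ be any type and let V = MvPolynomial σ ℂ. Suppose W is a ℂ-submodule of V that is invariant under multiplication by X_s for every s ∈ σ and invariant under the partial derivative pderiv s for every s ∈ σ. Then W = 0 or W = V. -/

import Mathlib

open MvPolynomial

private lemma coeff_pderiv' {σ : Type*} (s : σ) (p : MvPolynomial σ ℂ) (m : σ →₀ ℕ) :
    coeff m (pderiv s p) = (m s + 1 : ℂ) * coeff (m + Finsupp.single s 1) p := by
  classical
  induction p using MvPolynomial.induction_on' with
  | monomial u a =>
    rw [pderiv_monomial]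
    simp only [coeff_monomial]
    by_cases h : u = m + Finsupp.single s 1
    · subst h
      rw [if_pos (add_tsub_cancel_right m (Finsupp.single s 1)), if_pos rfl,
        Finsupp.add_apply, Finsupp.single_eq_same]
      push_cast
      ring
    · rw [if_neg h]
      by_cases h2 : u - Finsupp.single s 1 = m
      · have hu : u s = 0 := by
          by_contra hus
          have hle : Finsupp.single s 1 ≤ u := Finsupp.single_le_iff.mpr (by omega)
          exact h ((tsub_eq_iff_eq_add_of_le hle).mp h2)
        rw [if_pos h2]
        simp [hu]
      · rw [if_neg h2, mul_zero]
  | add p q hp hq =>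
    simp only [map_add, coeff_add, hp, hq]
    ring

private lemma one_mem_of_mem {σ : Type*} (W : Submodule ℂ (MvPolynomial σ ℂ))
    (hD : ∀ (s : σ) (p : MvPolynomial σ ℂ), p ∈ W → MvPolynomial.pderiv s p ∈ W) :
    ∀ (n : ℕ) (p : MvPolynomial σ ℂ), p ∈ W → p ≠ 0 → p.totalDegree ≤ n →
      (1 : MvPolynomial σ ℂ) ∈ W := by
  classical
  intro n
  induction n with
  | zero =>
    intro p hpW hp0 hdeg
    have hd0 : p.totalDegree = 0 := Nat.le_zero.mp hdeg
    rw [totalDegree_eq_zero_iff] at hd0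
    have hc : coeff 0 p ≠ 0 := by
      intro hc
      apply hp0
      ext m
      by_cases hm : m = 0
      · simpa [hm] using hc
      · by_contra hcm
        have hms : m ∈ p.support := by simpa [mem_support_iff] using hcm
        apply hm
        ext t
        exact hd0 m hms t
    have hpC : p = MvPolynomial.C (coeff 0 p) := by
      ext m
      by_cases hm : m = 0
      · simp [hm]
      · have : coeff m p = 0 := by
          by_contra hcm
          have hms : m ∈ p.support := by simpa [mem_support_iff] using hcm
          exact hm (by ext t; exact hd0 m hms t)
        rw [this, coeff_C, if_neg (Ne.symm hm)]
    set c := coeff 0 p with hcdef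
    have : c⁻¹ • p ∈ W := W.smul_mem _ hpW
    rwa [hpC, smul_eq_C_mul, ← C_mul, inv_mul_cancel₀ hc, C_1] at this
  | succ n ih =>
    intro p hpW hp0 hdeg
    by_cases hd0 : p.totalDegree = 0
    · exact ih p hpW hp0 (by omega)
    · obtain ⟨d, hds, hdsum⟩ := p.support.exists_mem_eq_sup
        (MvPolynomial.support_nonempty.mpr hp0) fun m : σ →₀ ℕ => m.sum fun _ e => e
      have hdpos : 0 < d.sum fun _ e => e := by
        rw [MvPolynomial.totalDegree, hdsum] at hd0
        omega
      obtain ⟨s, hs⟩ : ∃ s, d s ≠ 0 := by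
        by_contra h
        push_neg at h
        have hd : d = 0 := Finsupp.ext h
        rw [hd] at hdpos
        simp at hdpos
      have hle : Finsupp.single s 1 ≤ d := Finsupp.single_le_iff.mpr (by omega)
      set q := pderiv s p with hq
      have hqW : q ∈ W := hD s p hpW
      have hkey : coeff (d - Finsupp.single s 1) q = (d s : ℂ) * coeff d p := by
        rw [hq, coeff_pderiv', tsub_add_cancel_of_le hle]
        congr 1
        rw [Finsupp.tsub_apply, Finsupp.single_eq_same]
        norm_cast
        omega
      have hq0 : q ≠ 0 := by
        intro h
        rw [h] at hkey
        have hc : coeff d p ≠ 0 := mem_support_iff.mp hds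
        have hds' : (d s : ℂ) ≠ 0 := Nat.cast_ne_zero.mpr hs
        simp only [coeff_zero] at hkey
        rcases mul_eq_zero.mp hkey.symm with h' | h'
        · exact hds' h'
        · exact hc h'
      have hqdeg : q.totalDegree ≤ n := by
        rw [MvPolynomial.totalDegree]
        apply Finset.sup_le
        intro m hm
        have hcm : coeff m q ≠ 0 := mem_support_iff.mp hm
        have hc' : coeff (m + Finsupp.single s 1) p ≠ 0 := by
          intro h
          rw [hq, coeff_pderiv', h, mul_zero] at hcm
          exact hcm rfl
        have hmem : m + Finsupp.single s 1 ∈ p.support := mem_support_iff.mpr hc'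
        have hle2 : ((m + Finsupp.single s 1).sum fun _ e => e) ≤ p.totalDegree :=
          le_totalDegree hmem
        have hsum : ((m + Finsupp.single s 1).sum fun _ e => e)
            = (m.sum fun _ e => e) + 1 := by
          rw [Finsupp.sum_add_index (by simp) (by simp)]
          simp
        omega
      exact ih q hqW hq0 hqdeg

/-- Irreducibility of the bosonic Fock space over the Weyl algebra: a
ℂ-subspace of MvPolynomial σ ℂ invariant under multiplication by every X_s
and under every partial derivative pderiv s is 0 or everything. -/
theorem stmt_16 (σ : Type*) (W : Submodule ℂ (MvPolynomial σ ℂ))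
    (hX : ∀ (s : σ) (p : MvPolynomial σ ℂ), p ∈ W → MvPolynomial.X s * p ∈ W)
    (hD : ∀ (s : σ) (p : MvPolynomial σ ℂ), p ∈ W → MvPolynomial.pderiv s p ∈ W) :
    W = ⊥ ∨ W = ⊤ := by
  by_cases hbot : W = ⊥
  · exact Or.inl hbot
  · right
    obtain ⟨p, hpW, hp0⟩ : ∃ p ∈ W, p ≠ 0 := by
      by_contra h
      push_neg at h
      exact hbot (by
        ext x
        simp only [Submodule.mem_bot]
        exact ⟨fun hx => h x hx, fun hx => hx ▸ W.zero_mem⟩)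
    have h1 : (1 : MvPolynomial σ ℂ) ∈ W :=
      one_mem_of_mem W hD p.totalDegree p hpW hp0 le_rfl
    rw [eq_top_iff]
    rintro q -
    induction q using MvPolynomial.induction_on with
    | C a =>
      have := W.smul_mem a h1
      simpa [Algebra.smul_def] using this
    | add p q hp hq => exact W.add_mem hp hq
    | mul_X p s hp => exact (mul_comm p (X s)) ▸ hX s p hp
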